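/- A Q-subspace of the ring Λ̃ of eventually symmetric functions is invariant under the action of S_∞ (the group of permutations of the positive integers fixing all but finitely many integers) if and only if it is invariant under the action of the full symmetric group S_N of all permutations of the positive integers. -/

import Mathlib

/-- The action of a permutation of the (countably many) variables on a formal power
series, by permuting the variables. -/
noncomputable def permAct (σ : Equiv.Perm ℕ) (F : MvPowerSeries ℕ ℚ) : MvPowerSeries ℕ ℚ :=
  fun m => MvPowerSeries.coeff (Finsupp.equivMapDomain σ.symm m) F

/-- The total degree of a monomial exponent. -/
def totalDeg (m : ℕ →₀ ℕ) : ℕ := m.sum fun _ e => e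

/-- A power series has bounded (total) degree. -/
def BoundedDeg (F : MvPowerSeries ℕ ℚ) : Prop :=
  ∃ D : ℕ, ∀ m : ℕ →₀ ℕ, D < totalDeg m → MvPowerSeries.coeff m F = 0

/-- `F` is eventually symmetric: it has bounded degree and it is fixed by every
permutation of the variables fixing the first `n` of them, for some `n`. -/
def EvSym (F : MvPowerSeries ℕ ℚ) : Prop :=
  BoundedDeg F ∧ ∃ n : ℕ, ∀ σ : Equiv.Perm ℕ, (∀ i < n, σ i = i) → permAct σ F = F

lemma permAct_mul (σ ρ : Equiv.Perm ℕ) (F : MvPowerSeries ℕ ℚ) :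
    permAct (σ * ρ) F = permAct σ (permAct ρ F) := by
  funext m
  show MvPowerSeries.coeff (Finsupp.equivMapDomain (σ * ρ).symm m) F
      = MvPowerSeries.coeff (Finsupp.equivMapDomain ρ.symm
          (Finsupp.equivMapDomain σ.symm m)) F
  congr 1
  have : (σ * ρ).symm = σ.symm.trans ρ.symm := rfl
  rw [this, ← Finsupp.equivMapDomain_trans]

lemma exists_finPerm (σ : Equiv.Perm ℕ) (n : ℕ) :
    ∃ τ : Equiv.Perm ℕ, (∃ m : ℕ, ∀ i, m ≤ i → τ i = i) ∧ ∀ i < n, τ i = σ i := by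
  induction n with
  | zero => exact ⟨1, ⟨0, fun i _ => rfl⟩, fun i h => absurd h (Nat.not_lt_zero i)⟩
  | succ k ih =>
    obtain ⟨τ, ⟨m, hm⟩, hτ⟩ := ih
    refine ⟨Equiv.swap (σ k) (τ k) * τ, ⟨max (max (σ k) (τ k) + 1) m, ?_⟩, ?_⟩
    · intro i hi
      have h1 : τ i = i := hm i (le_trans (le_max_right _ _) hi)
      have h2 : max (σ k) (τ k) + 1 ≤ i := le_trans (le_max_left _ _) hi
      have hσk : i ≠ σ k := by omega
      have hτk : i ≠ τ k := by omega
      simp [Equiv.Perm.mul_apply, h1, Equiv.swap_apply_of_ne_of_ne hσk hτk]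
    · intro i hi
      rcases Nat.lt_succ_iff_lt_or_eq.mp hi with h | h
      · have h1 : τ i = σ i := hτ i h
        have h2 : σ i ≠ σ k := fun he => absurd (σ.injective he) (Nat.ne_of_lt h)
        have h3 : σ i ≠ τ k := fun he => by
          have : τ i = τ k := h1.trans he
          exact absurd (τ.injective this) (Nat.ne_of_lt h)
        simp [Equiv.Perm.mul_apply, h1, Equiv.swap_apply_of_ne_of_ne h2 h3]
      · subst h
        simp [Equiv.Perm.mul_apply]

theorem stmt8 (V : Submodule ℚ (MvPowerSeries ℕ ℚ)) (hV : ∀ F ∈ V, EvSym F) :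
    (∀ σ : Equiv.Perm ℕ, (∃ n : ℕ, ∀ i, n ≤ i → σ i = i) → ∀ F ∈ V, permAct σ F ∈ V) ↔
    (∀ σ : Equiv.Perm ℕ, ∀ F ∈ V, permAct σ F ∈ V) := by
  constructor
  · intro h σ F hF
    obtain ⟨-, n, hn⟩ := hV F hF
    obtain ⟨τ, hfin, hτ⟩ := exists_finPerm σ n
    have hfix : permAct (τ⁻¹ * σ) F = F := by
      refine hn _ fun i hi => ?_
      have : σ i = τ i := (hτ i hi).symm
      simp [Equiv.Perm.mul_apply, this]
    have key : permAct σ F = permAct τ F := by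
      have h1 : σ = τ * (τ⁻¹ * σ) := by rw [mul_inv_cancel_left]
      rw [h1, permAct_mul, hfix]
    rw [key]
    exact h τ hfin F hF
  · intro h σ _ F hF
    exact h σ F hF
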